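/- (Point correspondence.) For every x ∈ E = span{e₁, e₂, e₃}, the image under ♯ of the PGA point equals the CGA dual (IPNS) representation of the corresponding flat point: ♯(P(x)) = (ι(v_x) ∧ e∞) I_c⁻¹, where P(x) := I_E + ι(x)^{*_E} ι(e₀) and v_x := e₀ + x + ½Q(x)e∞. -/

import Mathlib

open CliffordAlgebra

/-- The matrix of the CGA inner product on `V = ℝ⁵`; indices `0, 1, 2, 3, 4`
correspond to the basis `e₀, e₁, e₂, e₃, e∞`. -/
def Bmat : Matrix (Fin 5) (Fin 5) ℝ :=
  !![0, 0, 0, 0, -1;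
     0, 1, 0, 0, 0;
     0, 0, 1, 0, 0;
     0, 0, 0, 1, 0;
     -1, 0, 0, 0, 0]

/-- The CGA quadratic form
`Q(a e₀ + x₁e₁ + x₂e₂ + x₃e₃ + b e∞) = x₁² + x₂² + x₃² − 2ab`. -/
noncomputable def Q : QuadraticForm ℝ (Fin 5 → ℝ) := Bmat.toQuadraticMap'

/-- The basis vectors of `V = ℝ⁵`: `e 0 = e₀`, `e 1, e 2, e 3` Euclidean, `e 4 = e∞`. -/
def e (i : Fin 5) : Fin 5 → ℝ := Pi.single i 1

/-- The linear map `♯ : V → V` fixing `e₁, e₂, e₃` and sending `e₀ ↦ -e∞`, `e∞ ↦ -e₀`. -/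
def sharpV : (Fin 5 → ℝ) →ₗ[ℝ] (Fin 5 → ℝ) where
  toFun v i := if i = 0 then -(v 4) else if i = 4 then -(v 0) else v i
  map_add' u v := by
    funext i
    by_cases h : i = 0 <;> by_cases h' : i = 4 <;> simp [h, h'] <;> ring
  map_smul' c v := by
    funext i
    by_cases h : i = 0 <;> by_cases h' : i = 4 <;> simp [h, h'] <;> ring

/-- Outer (wedge) product of a multivector with a vector:
`A ∧ v := ½ (A ι(v) + ι(v) α(A))`, where `α` is the grade involution. -/
noncomputable def wedgeVec (A : CliffordAlgebra Q) (v : Fin 5 → ℝ) : CliffordAlgebra Q :=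
  (1 / 2 : ℝ) • (A * ι Q v + ι Q v * involute A)

/-- The conformal pseudoscalar `I_c = (((e₀ ∧ e₁) ∧ e₂) ∧ e₃) ∧ e∞`. -/
noncomputable def Ic : CliffordAlgebra Q :=
  wedgeVec (wedgeVec (wedgeVec (wedgeVec (ι Q (e 0)) (e 1)) (e 2)) (e 3)) (e 4)

/-- The Euclidean pseudoscalar `I_E = ι(e₁) ι(e₂) ι(e₃)`. -/
noncomputable def IE : CliffordAlgebra Q := ι Q (e 1) * ι Q (e 2) * ι Q (e 3)

/-- The Euclidean dual `X^{*_E} := X I_E⁻¹ = -X I_E`. -/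
noncomputable def dualE (X : CliffordAlgebra Q) : CliffordAlgebra Q := -(X * IE)

/-- The PGA representation of the Euclidean point `x`: `P(x) = I_E + x^{*_E} e₀`. -/
noncomputable def Ppt (x : Fin 5 → ℝ) : CliffordAlgebra Q :=
  IE + dualE (ι Q x) * ι Q (e 0)

/-- The conformal embedding `v_x = e₀ + x + ½ Q(x) e∞` of a Euclidean point `x`. -/
noncomputable def vpt (x : Fin 5 → ℝ) : Fin 5 → ℝ :=
  e 0 + x + (Q x / 2) • e 4

/- ## Auxiliary lemmas -/

lemma Q_apply (v : Fin 5 → ℝ) :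
    Q v = v 1 ^ 2 + v 2 ^ 2 + v 3 ^ 2 - 2 * v 0 * v 4 := by
  simp [Q, Matrix.toQuadraticMap', Matrix.toQuadraticForm', LinearMap.BilinMap.toQuadraticMap_apply,
    Matrix.toLinearMap₂'_apply, Fin.sum_univ_five, Bmat, Matrix.vecHead, Matrix.vecTail]
  ring

lemma polar_eq (u v : Fin 5 → ℝ) :
    QuadraticMap.polar Q u v =
      2*(u 1*v 1 + u 2*v 2 + u 3*v 3) - 2*(u 0*v 4 + u 4*v 0) := by
  simp [QuadraticMap.polar, Q_apply]
  ring

lemma anticomm {u v : Fin 5 → ℝ} (h : QuadraticMap.polar Q u v = 0) :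
    ι Q u * ι Q v = -(ι Q v * ι Q u) := by
  have h2 := ι_mul_ι_add_swap (Q := Q) u v
  rw [h, map_zero] at h2
  exact eq_neg_of_add_eq_zero_left h2

lemma swap' {A B : CliffordAlgebra Q} (h : A * B = -(B * A)) (t : CliffordAlgebra Q) :
    A * (B * t) = -(B * (A * t)) := by
  rw [← mul_assoc, h, neg_mul, mul_assoc]

lemma sqz' {A : CliffordAlgebra Q} (h : A * A = 0) (t : CliffordAlgebra Q) :
    A * (A * t) = 0 := by
  rw [← mul_assoc, h, zero_mul]

set_option maxHeartbeats 2000000 in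
/-- (Point correspondence.) For every `x ∈ span{e₁,e₂,e₃}`,
`♯(P(x)) = (ι(v_x) ∧ e∞) I_c⁻¹`, the CGA dual (IPNS) representation of the flat point. -/
theorem sharp_point_correspondence (F : CliffordAlgebra Q →ₐ[ℝ] CliffordAlgebra Q)
    (hF : ∀ v : Fin 5 → ℝ, F (ι Q v) = ι Q (sharpV v)) :
    ∀ x : Fin 5 → ℝ, x 0 = 0 → x 4 = 0 →
      F (Ppt x) = wedgeVec (ι Q (vpt x)) (e 4) * (-Ic) := by
  intro x hx0 hx4
  have h1 : sharpV (e 1) = e 1 := by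
    funext i; fin_cases i <;> simp [sharpV, e, Pi.single_apply]
  have h2 : sharpV (e 2) = e 2 := by
    funext i; fin_cases i <;> simp [sharpV, e, Pi.single_apply]
  have h3 : sharpV (e 3) = e 3 := by
    funext i; fin_cases i <;> simp [sharpV, e, Pi.single_apply]
  have h0 : sharpV (e 0) = -e 4 := by
    funext i; fin_cases i <;> simp [sharpV, e, Pi.single_apply]
  have hxs : sharpV x = x := by
    funext i
    by_cases h : i = 0 <;> by_cases h' : i = 4 <;>
      simp [sharpV, h, h', hx0, hx4]
  have A10 : ι Q (e 1) * ι Q (e 0) = -(ι Q (e 0) * ι Q (e 1)) :=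
    anticomm (by simp [polar_eq, e, Pi.single_apply])
  have A20 : ι Q (e 2) * ι Q (e 0) = -(ι Q (e 0) * ι Q (e 2)) :=
    anticomm (by simp [polar_eq, e, Pi.single_apply])
  have A21 : ι Q (e 2) * ι Q (e 1) = -(ι Q (e 1) * ι Q (e 2)) :=
    anticomm (by simp [polar_eq, e, Pi.single_apply])
  have A30 : ι Q (e 3) * ι Q (e 0) = -(ι Q (e 0) * ι Q (e 3)) :=
    anticomm (by simp [polar_eq, e, Pi.single_apply])
  have A31 : ι Q (e 3) * ι Q (e 1) = -(ι Q (e 1) * ι Q (e 3)) :=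
    anticomm (by simp [polar_eq, e, Pi.single_apply])
  have A32 : ι Q (e 3) * ι Q (e 2) = -(ι Q (e 2) * ι Q (e 3)) :=
    anticomm (by simp [polar_eq, e, Pi.single_apply])
  have A41 : ι Q (e 4) * ι Q (e 1) = -(ι Q (e 1) * ι Q (e 4)) :=
    anticomm (by simp [polar_eq, e, Pi.single_apply])
  have A42 : ι Q (e 4) * ι Q (e 2) = -(ι Q (e 2) * ι Q (e 4)) :=
    anticomm (by simp [polar_eq, e, Pi.single_apply])
  have A43 : ι Q (e 4) * ι Q (e 3) = -(ι Q (e 3) * ι Q (e 4)) :=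
    anticomm (by simp [polar_eq, e, Pi.single_apply])
  have AX4 : ι Q (e 4) * ι Q x = -(ι Q x * ι Q (e 4)) :=
    anticomm (by simp [polar_eq, e, Pi.single_apply, hx0, hx4])
  have S0 : ι Q (e 0) * ι Q (e 0) = 0 := by
    rw [ι_sq_scalar]; simp [Q_apply, e, Pi.single_apply]
  have S4 : ι Q (e 4) * ι Q (e 4) = 0 := by
    rw [ι_sq_scalar]; simp [Q_apply, e, Pi.single_apply]
  have h40 : ι Q (e 4) * ι Q (e 0) = (-2 : ℝ) • 1 - ι Q (e 0) * ι Q (e 4) := by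
    rw [ι_mul_ι_comm]
    have hp : QuadraticMap.polar Q (e 4) (e 0) = -2 := by
      simp [polar_eq, e, Pi.single_apply]
    rw [hp, Algebra.algebraMap_eq_smul_one]
  have h40' : ∀ t : CliffordAlgebra Q,
      ι Q (e 4) * (ι Q (e 0) * t) = (-2 : ℝ) • t - ι Q (e 0) * (ι Q (e 4) * t) := by
    intro t
    rw [← mul_assoc, h40, sub_mul, smul_mul_assoc, one_mul, mul_assoc]
  have hv : ι Q (vpt x) = ι Q (e 0) + ι Q x + (Q x / 2) • ι Q (e 4) := by
    simp [vpt, map_add, map_smul]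
  simp only [Ppt, dualE, IE, Ic, wedgeVec, vpt] at *
  simp only [map_add, map_mul, map_neg, map_smul, hF, h1, h2, h3, h0, hxs,
    involute_ι] at *
  simp only [hv, map_neg, mul_add, add_mul, mul_neg, neg_mul, neg_neg, mul_sub,
    sub_mul, smul_add, smul_neg, smul_sub, smul_mul_assoc, mul_smul_comm,
    smul_smul, mul_assoc, swap' A10, swap' A20, swap' A21, swap' A30, swap' A31,
    swap' A32, swap' A41, swap' A42, swap' A43, swap' AX4, A10, A20, A21, A30,
    A31, A32, A41, A42, A43, AX4, sqz' S0, sqz' S4, S0, S4, h40, h40', mul_one,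
    one_mul, mul_zero, zero_mul, smul_zero, zero_smul, add_zero, zero_add]

  module
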